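/- Let W₁ ⊂ W₂ be concentric axis-parallel squares in ℝ² of side lengths h and 2h respectively. Let 𝒞 be a spanning cycle through a finite set P of at least 3 points in ℝ², and suppose at least q points of P lie in W₁. If no edge of 𝒞 has both of its endpoints inside W₂, then the length of 𝒞 satisfies L(𝒞) ≥ q·h/2. -/

import Mathlib

open MeasureTheory ProbabilityTheory Filter Finset
open scoped ENNReal Classical

noncomputable section

/-- Length of the closed tour visiting the points of `l` in cyclic order. -/
def tourLength (l : List (ℝ × ℝ)) : ℝ :=
  ((l.zip (l.rotate 1)).map fun p => dist p.1 p.2).sum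

/-- TSP length of a finite set of points in the plane: the minimum over spanning cycles
(cyclic orderings of the points) of the total edge length; `0` if there are at most
two points. -/
def tspLength (P : Finset (ℝ × ℝ)) : ℝ :=
  if P.card ≤ 2 then 0
  else sInf {L : ℝ | ∃ l : List (ℝ × ℝ), l.Nodup ∧ l.toFinset = P ∧ L = tourLength l}

/-- Axis-parallel square with lower-left corner `c` and side length `r`. -/
def square (c : ℝ × ℝ) (r : ℝ) : Set (ℝ × ℝ) := Set.Icc c (c.1 + r, c.2 + r)

def unitSquare : Set (ℝ × ℝ) := square (0, 0) 1

private lemma sum_map_ite_aux {α : Type*} (pred : α → Prop) [DecidablePred pred] (c : ℝ)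
    (L : List α) :
    (L.map fun p => if pred p then c else 0).sum
      = ((L.filter fun p => decide (pred p)).length : ℝ) * c := by
  induction L with
  | nil => simp
  | cons a L ih =>
      by_cases hp : pred a
      · simp [List.filter_cons, hp, ih]; ring
      · simp [List.filter_cons, hp, ih]

/-- if at least `q` points of a spanning cycle lie in the inner square
`W₁` (side `h`) and no edge of the cycle has both endpoints in the concentric square `W₂`
(side `2h`), then the cycle has length at least `q h / 2`. -/
theorem cycle_length_ge_of_no_local_edge
    (m : ℝ × ℝ) (h : ℝ) (hh : 0 < h)
    (P : Finset (ℝ × ℝ)) (hcard : 3 ≤ P.card)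
    (l : List (ℝ × ℝ)) (hnd : l.Nodup) (hsp : l.toFinset = P)
    (q : ℕ)
    (hq : q ≤ (P.filter fun p => p ∈ square (m.1 - h / 2, m.2 - h / 2) h).card)
    (hno : ∀ p ∈ l.zip (l.rotate 1),
      ¬(p.1 ∈ square (m.1 - h, m.2 - h) (2 * h) ∧
        p.2 ∈ square (m.1 - h, m.2 - h) (2 * h))) :
    (q : ℝ) * h / 2 ≤ tourLength l := by
  set W1 : Set (ℝ × ℝ) := square (m.1 - h / 2, m.2 - h / 2) h with hW1def
  set W2 : Set (ℝ × ℝ) := square (m.1 - h, m.2 - h) (2 * h) with hW2def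
  have hW12 : W1 ⊆ W2 := by
    intro x hx
    simp only [hW1def, hW2def, square, Set.mem_Icc, Prod.le_def] at hx ⊢
    obtain ⟨⟨h1, h2⟩, h3, h4⟩ := hx
    exact ⟨⟨by linarith, by linarith⟩, by linarith, by linarith⟩
  -- each edge starting in W1 has length ≥ h/2
  have hedge : ∀ p ∈ l.zip (l.rotate 1), p.1 ∈ W1 → h / 2 ≤ dist p.1 p.2 := by
    intro p hp h1
    have hp2 : p.2 ∉ W2 := fun hx => hno p hp ⟨hW12 h1, hx⟩
    simp only [hW1def, square, Set.mem_Icc, Prod.le_def] at h1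
    obtain ⟨⟨a1, a2⟩, a3, a4⟩ := h1
    simp only [hW2def, square, Set.mem_Icc, Prod.le_def, not_and_or, not_le] at hp2
    rw [Prod.dist_eq, Real.dist_eq, Real.dist_eq]
    rcases hp2 with (hb | hb) | (hb | hb)
    · exact le_trans (le_trans (by linarith) (le_abs_self _)) (le_max_left _ _)
    · exact le_trans (le_trans (by linarith) (le_abs_self _)) (le_max_right _ _)
    · exact le_trans (le_trans (by linarith) (neg_le_abs _)) (le_max_left _ _)
    · exact le_trans (le_trans (by linarith) (neg_le_abs _)) (le_max_right _ _)
  -- lower bound the sum by the indicator sum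
  have hlen : l.length ≤ (l.rotate 1).length := by simp
  have hsum : ((l.zip (l.rotate 1)).map fun p => if p.1 ∈ W1 then h / 2 else 0).sum
      ≤ tourLength l := by
    apply List.sum_le_sum
    intro p hp
    by_cases h1 : p.1 ∈ W1
    · simpa [h1] using hedge p hp h1
    · simp [h1, dist_nonneg]
  rw [sum_map_ite_aux (fun p : (ℝ × ℝ) × (ℝ × ℝ) => p.1 ∈ W1) (h / 2)] at hsum
  have hcount : ((l.zip (l.rotate 1)).filter
      (fun p : (ℝ × ℝ) × (ℝ × ℝ) => decide (p.1 ∈ W1))).length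
      = (l.filter (fun x => decide (x ∈ W1))).length := by
    rw [← List.countP_eq_length_filter, ← List.countP_eq_length_filter]
    conv_rhs => rw [← List.map_fst_zip hlen]
    rw [List.countP_map]
    rfl
  have hql : q ≤ (l.filter (fun x => decide (x ∈ W1))).length := by
    have : (P.filter fun p => p ∈ W1).card = (l.filter (fun x => decide (x ∈ W1))).length := by
      have hts : (l.filter (fun x => decide (x ∈ W1))).toFinset
          = Finset.filter (fun p => p ∈ W1) l.toFinset := by
        rw [List.toFinset_filter]
        simp
      rw [← hsp, ← hts, List.toFinset_card_of_nodup (hnd.filter _)]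
    omega
  rw [hcount] at hsum
  have : (q : ℝ) * (h / 2) ≤ ((l.filter (fun x => decide (x ∈ W1))).length : ℝ) * (h / 2) := by
    apply mul_le_mul_of_nonneg_right _ (by linarith)
    exact_mod_cast hql
  linarith

end
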